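/- If a convex polynomial p : ℝⁿ → ℝ has positive definite Hessian at some point x₀ ∈ ℝⁿ, then p has a unique global minimizer. -/

import Mathlib

open MvPolynomial


lemma deriv_aeval_line (n : ℕ) (x₀ v : Fin n → ℝ) (p : MvPolynomial (Fin n) ℝ) :
    Polynomial.derivative (aeval (fun i => Polynomial.C (x₀ i) + Polynomial.C (v i) * Polynomial.X) p)
      = ∑ i : Fin n, aeval (fun i => Polynomial.C (x₀ i) + Polynomial.C (v i) * Polynomial.X) (pderiv i p) * Polynomial.C (v i) := by
  set φ : Fin n → Polynomial ℝ := fun i => Polynomial.C (x₀ i) + Polynomial.C (v i) * Polynomial.X with hφ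
  induction p using MvPolynomial.induction_on with
  | C a => simp [φ]
  | add f g hf hg => simp [map_add, hf, hg, Finset.sum_add_distrib, add_mul]
  | mul_X f j hf =>
      classical
      simp only [map_mul, aeval_X, Polynomial.derivative_mul, hf, pderiv_mul, pderiv_X, map_add,
        Finset.sum_mul, add_mul, Finset.sum_add_distrib]
      refine congrArg₂ (· + ·) ?_ ?_
      · exact Finset.sum_congr rfl fun i _ => by ring
      · rw [Finset.sum_eq_single j]
        · simp [φ]
          try ring
        · intro b _ hb
          rw [Pi.single_eq_of_ne hb.symm]
          simp
        · simp


lemma eval_aeval_line (n : ℕ) (x₀ v : Fin n → ℝ) (p : MvPolynomial (Fin n) ℝ) (t : ℝ) :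
    Polynomial.eval t (aeval (fun i => Polynomial.C (x₀ i) + Polynomial.C (v i) * Polynomial.X) p)
      = eval (fun i => x₀ i + v i * t) p := by
  have h := MvPolynomial.comp_aeval_apply (R := ℝ)
      (f := fun i : Fin n => Polynomial.C (x₀ i) + Polynomial.C (v i) * Polynomial.X)
      (Polynomial.aeval t) p
  simp only [map_add, map_mul, Polynomial.aeval_C, Polynomial.aeval_X] at h
  rw [← Polynomial.coe_aeval_eq_eval, h]
  rw [show (fun i => algebraMap ℝ ℝ (x₀ i) + algebraMap ℝ ℝ (v i) * t) = fun i => x₀ i + v i * t from by funext i; simp]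
  rw [← MvPolynomial.coe_aeval_eq_eval]
  rfl

lemma natDegree_le_one_of_bddAbove (q : Polynomial ℝ)
    (hconv : ConvexOn ℝ Set.univ fun t => q.eval t) (C : ℝ)
    (hbdd : ∀ t : ℝ, 0 ≤ t → q.eval t ≤ C) : q.natDegree ≤ 1 := by
  by_contra hd
  push_neg at hd
  have hq0 : q ≠ 0 := fun h => by simp [h] at hd
  have hdeg1 : (1 : WithBot ℕ) < q.degree := by
    rw [Polynomial.degree_eq_natDegree hq0]
    exact_mod_cast hd
  have hdeg : 0 < q.degree := lt_trans (by norm_num) hdeg1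
  have hlow : ∀ t : ℝ, 1 ≤ t → q.eval 0 + (q.eval 1 - q.eval 0) * t ≤ q.eval t := by
    intro t ht
    have ht0 : (0:ℝ) < t := lt_of_lt_of_le one_pos ht
    have ha : (0:ℝ) ≤ 1 - 1/t := sub_nonneg.2 (by rw [div_le_one ht0]; exact ht)
    have hb : (0:ℝ) ≤ 1/t := by positivity
    have hs : (1 - 1/t) + 1/t = 1 := by ring
    have h2 := hconv.2 (Set.mem_univ (0:ℝ)) (Set.mem_univ t) ha hb hs
    simp only [smul_eq_mul, mul_zero, zero_add] at h2
    rw [show (1/t : ℝ) * t = 1 from by field_simp] at h2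
    have h5 : t * ((1 - 1/t) * q.eval 0 + 1/t * q.eval t) = (t-1)*q.eval 0 + q.eval t := by
      field_simp
      try ring
    have h4 := mul_le_mul_of_nonneg_left h2 ht0.le
    rw [h5] at h4
    nlinarith [h4]
  rcases lt_or_ge 0 q.leadingCoeff with hL | hL
  · have := q.tendsto_atTop_of_leadingCoeff_nonneg hdeg hL.le
    obtain ⟨t, ht0, htC⟩ := ((this.eventually (Filter.eventually_gt_atTop C)).and
      (Filter.eventually_ge_atTop (0:ℝ))).exists
    exact absurd (hbdd t htC) (not_le.2 ht0)
  · set a : Polynomial ℝ := Polynomial.C (q.eval 1 - q.eval 0) * Polynomial.X +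
      Polynomial.C (q.eval 0) with ha
    have hdegaff : a.degree < q.degree :=
      lt_of_le_of_lt (Polynomial.degree_linear_le) hdeg1
    set r : Polynomial ℝ := q - a with hr
    have hrdeg : r.degree = q.degree := Polynomial.degree_sub_eq_left_of_degree_lt hdegaff
    have hrL : r.leadingCoeff ≤ 0 := by
      rw [hr, Polynomial.leadingCoeff_sub_of_degree_lt hdegaff]; exact hL
    have := r.tendsto_atBot_of_leadingCoeff_nonpos (by rw [hrdeg]; exact hdeg) hrL
    obtain ⟨t, ht0, ht1⟩ := ((this.eventually (Filter.eventually_lt_atBot (0:ℝ))).and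
      (Filter.eventually_ge_atTop (1:ℝ))).exists
    have hge : 0 ≤ r.eval t := by
      have := hlow t ht1
      simp only [hr, ha, Polynomial.eval_sub, Polynomial.eval_add, Polynomial.eval_mul,
        Polynomial.eval_C, Polynomial.eval_X]
      nlinarith [this]
    exact absurd hge (not_le.2 ht0)


lemma key_ray (n : ℕ) (p : MvPolynomial (Fin n) ℝ)
    (hconv : ConvexOn ℝ Set.univ (fun x : Fin n → ℝ => eval x p))
    (x₀ : Fin n → ℝ)
    (hhess : (Matrix.of fun i j : Fin n =>
        eval x₀ (pderiv i (pderiv j p))).PosDef)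
    (v : Fin n → ℝ) (hv : v ≠ 0) (C : ℝ)
    (hC : ∀ t : ℝ, 0 ≤ t → eval (fun i => x₀ i + v i * t) p ≤ C) : False := by
  set φ : Fin n → Polynomial ℝ := fun i => Polynomial.C (x₀ i) + Polynomial.C (v i) * Polynomial.X with hφ
  set q : Polynomial ℝ := aeval φ p with hq
  have heval : ∀ t : ℝ, q.eval t = eval (fun i => x₀ i + v i * t) p :=
    fun t => eval_aeval_line n x₀ v p t
  -- convexity of q.eval
  have hconvq : ConvexOn ℝ Set.univ fun t => q.eval t := by
    refine ⟨convex_univ, ?_⟩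
    intro a _ b _ θ μ hθ hμ hθμ
    simp only [heval, smul_eq_mul]
    have hpt : (fun i => x₀ i + v i * (θ * a + μ * b))
        = θ • (fun i => x₀ i + v i * a) + μ • (fun i => x₀ i + v i * b) := by
      have hμ1 : μ = 1 - θ := by linarith
      subst hμ1
      funext i
      simp only [Pi.add_apply, Pi.smul_apply, smul_eq_mul]
      ring
    rw [hpt]
    exact hconv.2 (Set.mem_univ _) (Set.mem_univ _) hθ hμ hθμ
  have hdeg : q.natDegree ≤ 1 := natDegree_le_one_of_bddAbove q hconvq C (fun t ht => by
    rw [heval]; exact hC t ht)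
  -- second derivative is zero
  have hdd : Polynomial.derivative (Polynomial.derivative q) = 0 := by
    have h1 : (Polynomial.derivative q).natDegree = 0 := by
      have := Polynomial.natDegree_derivative_le q
      omega
    rw [Polynomial.eq_C_of_natDegree_eq_zero h1]
    exact Polynomial.derivative_C
  -- compute the second derivative at 0
  have hx₀ : ∀ r : MvPolynomial (Fin n) ℝ, Polynomial.eval 0 (aeval φ r) = eval x₀ r := by
    intro r
    rw [eval_aeval_line n x₀ v r 0]
    have h0 : (fun i => x₀ i + v i * 0) = x₀ := by funext i; ring
    rw [h0]
  have hform : Polynomial.eval 0 (Polynomial.derivative (Polynomial.derivative q))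
      = ∑ i : Fin n, ∑ j : Fin n, eval x₀ (pderiv j (pderiv i p)) * v j * v i := by
    rw [hq, deriv_aeval_line n x₀ v p, map_sum]
    rw [Finset.sum_congr rfl (fun i _ => by
      rw [Polynomial.derivative_mul, Polynomial.derivative_C, mul_zero, add_zero,
        deriv_aeval_line n x₀ v (pderiv i p)])]
    rw [Polynomial.eval_finset_sum]
    refine Finset.sum_congr rfl fun i _ => ?_
    rw [Polynomial.eval_mul, Polynomial.eval_C, Polynomial.eval_finset_sum]
    rw [Finset.sum_mul]
    refine Finset.sum_congr rfl fun j _ => ?_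
    rw [Polynomial.eval_mul, Polynomial.eval_C, hx₀]
  rw [hdd] at hform
  simp only [Polynomial.eval_zero] at hform
  -- positive definiteness
  have hpos := hhess.dotProduct_mulVec_pos hv
  have hdot : dotProduct v (Matrix.mulVec (Matrix.of fun i j : Fin n => eval x₀ (pderiv i (pderiv j p))) v)
      = ∑ i : Fin n, ∑ j : Fin n, eval x₀ (pderiv i (pderiv j p)) * v j * v i := by
    simp only [dotProduct, Matrix.mulVec, Matrix.of_apply]
    refine Finset.sum_congr rfl fun i _ => ?_
    rw [Finset.mul_sum]
    exact Finset.sum_congr rfl fun j _ => by ring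
  rw [show (star v : Fin n → ℝ) = v from rfl] at hpos
  rw [hdot] at hpos
  have hform' : (0:ℝ) = ∑ i : Fin n, ∑ j : Fin n, eval x₀ (pderiv i (pderiv j p)) * v j * v i := by
    rw [hform, Finset.sum_comm]
    exact Finset.sum_congr rfl fun i _ => Finset.sum_congr rfl fun j _ => by ring
  rw [← hform'] at hpos
  exact lt_irrefl _ hpos


theorem stmt2 (n : ℕ) (p : MvPolynomial (Fin n) ℝ)
    (hconv : ConvexOn ℝ Set.univ (fun x : Fin n → ℝ => eval x p))
    (x₀ : Fin n → ℝ)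
    (hhess : (Matrix.of fun i j : Fin n =>
        eval x₀ (pderiv i (pderiv j p))).PosDef) :
    ∃! xstar : Fin n → ℝ, ∀ x : Fin n → ℝ, eval xstar p ≤ eval x p := by
  set c : ℝ := eval x₀ p with hc
  set S : Set (Fin n → ℝ) := {x | eval x p ≤ c} with hS
  have hcont : Continuous fun x : Fin n → ℝ => eval x p := MvPolynomial.continuous_eval p
  have hScl : IsClosed S := isClosed_le hcont continuous_const
  have hx₀S : x₀ ∈ S := le_refl c
  -- segment lemma: if value at parameter t along a ray is ≤ c, so is any 0 ≤ s ≤ t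
  have hseg : ∀ (v : Fin n → ℝ) (s t : ℝ), 0 ≤ s → s ≤ t →
      eval (fun i => x₀ i + v i * t) p ≤ c → eval (fun i => x₀ i + v i * s) p ≤ c := by
    intro v s t hs hst hbt
    rcases eq_or_lt_of_le (hs.trans hst) with ht | ht
    · have hs0 : s = 0 := le_antisymm (hst.trans ht.symm.le) hs
      have : (fun i => x₀ i + v i * s) = x₀ := by funext i; rw [hs0]; ring
      rw [this]
    · set θ : ℝ := s / t with hθ
      have hθ0 : 0 ≤ θ := div_nonneg hs ht.le
      have hθ1 : θ ≤ 1 := by rw [hθ, div_le_one ht]; exact hst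
      have hpt : (fun i => x₀ i + v i * s)
          = (1 - θ) • x₀ + θ • (fun i => x₀ i + v i * t) := by
        funext i
        simp only [Pi.add_apply, Pi.smul_apply, smul_eq_mul]
        have h5 : θ * t = s := by rw [hθ]; field_simp
        linear_combination (-(v i)) * h5
      rw [hpt]
      calc eval ((1 - θ) • x₀ + θ • (fun i => x₀ i + v i * t)) p
          ≤ (1 - θ) * c + θ * eval (fun i => x₀ i + v i * t) p :=
            hconv.2 (Set.mem_univ _) (Set.mem_univ _) (by linarith) hθ0 (by ring)
        _ ≤ (1 - θ) * c + θ * c := by nlinarith [hbt, hθ0]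
        _ = c := by ring
  -- S is bounded
  have hSb : Bornology.IsBounded S := by
    by_contra hb
    rw [isBounded_iff_forall_norm_le] at hb
    push_neg at hb
    obtain ⟨y0, _, hy0⟩ := hb ‖x₀‖
    have : Nontrivial (Fin n → ℝ) := ⟨⟨y0, x₀, fun h => absurd (h ▸ rfl) hy0.ne'⟩⟩
    set K : ℕ → Set (Fin n → ℝ) := fun m =>
      Metric.sphere (0 : Fin n → ℝ) 1 ∩ {v | eval (fun i => x₀ i + v i * (m:ℝ)) p ≤ c} with hK
    have hKcl : ∀ m, IsClosed (K m) := by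
      intro m
      refine (Metric.isClosed_sphere).inter (isClosed_le ?_ continuous_const)
      exact (MvPolynomial.continuous_eval p).comp (continuous_pi fun i =>
        continuous_const.add ((continuous_apply i).mul continuous_const))
    have hKmono : ∀ m, K (m+1) ⊆ K m := by
      intro m v hv
      exact ⟨hv.1, hseg v (m:ℝ) ((m+1 : ℕ) : ℝ) (Nat.cast_nonneg m) (by push_cast; linarith) hv.2⟩
    have hKne : ∀ m, (K m).Nonempty := by
      intro m
      obtain ⟨y, hyS, hy⟩ := hb ((m:ℝ) + ‖x₀‖)
      have hr : (m:ℝ) < ‖y - x₀‖ := by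
        have := norm_sub_norm_le y x₀
        linarith
      have hr0 : (0:ℝ) < ‖y - x₀‖ := lt_of_le_of_lt (Nat.cast_nonneg m) hr
      set v : Fin n → ℝ := ‖y - x₀‖⁻¹ • (y - x₀) with hv
      refine ⟨v, ?_, ?_⟩
      · simp only [Metric.mem_sphere, dist_zero_right, hv, norm_smul, norm_inv, norm_norm]
        field_simp
      · refine hseg v (m:ℝ) ‖y - x₀‖ (Nat.cast_nonneg m) hr.le ?_
        have : (fun i => x₀ i + v i * ‖y - x₀‖) = y := by
          funext i
          simp only [hv, Pi.smul_apply, Pi.sub_apply, smul_eq_mul]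
          field_simp
          ring
        rw [this]
        exact hyS
    obtain ⟨v, hvmem⟩ := IsCompact.nonempty_iInter_of_sequence_nonempty_isCompact_isClosed
      K hKmono hKne ((isCompact_sphere 0 1).of_isClosed_subset (hKcl 0) (fun v hv => hv.1))
      hKcl
    simp only [Set.mem_iInter] at hvmem
    have hvs : ‖v‖ = 1 := by
      have := (hvmem 0).1
      simpa using this
    have hvne : v ≠ 0 := fun h => by simp [h] at hvs
    refine key_ray n p hconv x₀ hhess v hvne c ?_
    intro t ht
    exact hseg v t (⌈t⌉₊ : ℝ) ht (Nat.le_ceil t) (hvmem ⌈t⌉₊).2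
  -- minimizer on S
  have hScom : IsCompact S := Metric.isCompact_of_isClosed_isBounded hScl hSb
  obtain ⟨xs, hxsS, hxs⟩ := hScom.exists_isMinOn ⟨x₀, hx₀S⟩ hcont.continuousOn
  have hmin : ∀ x : Fin n → ℝ, eval xs p ≤ eval x p := by
    intro x
    by_cases hx : x ∈ S
    · exact hxs hx
    · have : c < eval x p := not_le.1 hx
      exact le_trans (hxs hx₀S) this.le
  refine ⟨xs, hmin, ?_⟩
  -- uniqueness
  intro y hy
  by_contra hne
  set v : Fin n → ℝ := fun i => y i - xs i with hv
  have hvne : v ≠ 0 := by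
    intro h
    apply hne
    funext i
    have := congrFun h i
    simp only [hv, Pi.zero_apply] at this
    linarith
  set m : ℝ := eval xs p with hm
  have hym : eval y p = m := le_antisymm (hy xs) (hmin y)
  -- p is constant on the whole line through xs in direction v
  have hline : ∀ s : ℝ, eval (fun i => xs i + v i * s) p = m := by
    have hq : aeval (fun i => Polynomial.C (xs i) + Polynomial.C (v i) * Polynomial.X) p
        = Polynomial.C m := by
      apply Polynomial.eq_of_infinite_eval_eq
      apply Set.Infinite.mono (s := Set.Icc (0:ℝ) 1)
      · intro s hs
        simp only [Set.mem_setOf_eq, Polynomial.eval_C]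
        rw [eval_aeval_line]
        have hpt : (fun i => xs i + v i * s) = (1 - s) • xs + s • y := by
          funext i
          simp only [Pi.add_apply, Pi.smul_apply, smul_eq_mul, hv]
          ring
        refine le_antisymm ?_ ?_
        · rw [hpt]
          calc eval ((1 - s) • xs + s • y) p
              ≤ (1 - s) * eval xs p + s * eval y p :=
                hconv.2 (Set.mem_univ _) (Set.mem_univ _) (by linarith [hs.2]) hs.1 (by ring)
            _ = m := by rw [hym, ← hm]; ring
        · exact hmin _
      · exact Set.Icc_infinite (show (0:ℝ) < 1 by norm_num)
    intro s
    rw [← eval_aeval_line n xs v p s, hq, Polynomial.eval_C]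
  -- bound along the line through x₀ in direction v
  refine key_ray n p hconv x₀ hhess v hvne
    ((m + eval (fun i => 2 * x₀ i - xs i) p) / 2) ?_
  intro t ht
  have hpt : (fun i => x₀ i + v i * t)
      = (1/2 : ℝ) • (fun i => xs i + v i * (2*t)) + (1/2 : ℝ) • (fun i => 2 * x₀ i - xs i) := by
    funext i
    simp only [Pi.add_apply, Pi.smul_apply, smul_eq_mul]
    ring
  rw [hpt]
  calc eval ((1/2 : ℝ) • (fun i => xs i + v i * (2*t)) + (1/2 : ℝ) • (fun i => 2 * x₀ i - xs i)) p
      ≤ (1/2) * eval (fun i => xs i + v i * (2*t)) p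
        + (1/2) * eval (fun i => 2 * x₀ i - xs i) p :=
        hconv.2 (Set.mem_univ _) (Set.mem_univ _) (by norm_num) (by norm_num) (by norm_num)
    _ = (m + eval (fun i => 2 * x₀ i - xs i) p) / 2 := by rw [hline (2*t)]; ring
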